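/- Let p ∈ (0,∞), n ∈ ℕ, m ≥ 0, and f : ℝⁿ → [0,∞) measurable, positively homogeneous of degree m, with 0 < ∫ f(x) e^{-‖x‖_p^p} dx < ∞. Let X be a random vector with density proportional to f(x)·e^{-‖x‖_p^p}. Then X/‖X‖_p and ‖X‖_p are independent. -/

import Mathlib

open MeasureTheory ProbabilityTheory Real

/-- ℓ_p^n (quasi-)norm on `Fin n → ℝ`. -/
noncomputable def lpnorm (p : ℝ) {n : ℕ} (x : Fin n → ℝ) : ℝ :=
  (∑ i, |x i| ^ p) ^ (1 / p)

open Set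

variable {n : ℕ} {p : ℝ}

lemma lpnorm_nonneg (p : ℝ) (x : Fin n → ℝ) : 0 ≤ lpnorm p x :=
  Real.rpow_nonneg (Finset.sum_nonneg fun i _ => Real.rpow_nonneg (abs_nonneg _) _) _

lemma measurable_lpnorm (p : ℝ) (n : ℕ) : Measurable (lpnorm p (n := n)) := by
  unfold lpnorm; fun_prop

lemma lpnorm_pos (hp : 0 < p) {x : Fin n → ℝ} (hx : x ≠ 0) : 0 < lpnorm p x := by
  apply Real.rpow_pos_of_pos
  obtain ⟨i, hi⟩ : ∃ i, x i ≠ 0 := by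
    by_contra h; push_neg at h; exact hx (funext h)
  exact Finset.sum_pos' (fun j _ => Real.rpow_nonneg (abs_nonneg _) _)
    ⟨i, Finset.mem_univ i, Real.rpow_pos_of_pos (abs_pos.2 hi) _⟩

lemma lpnorm_smul (hp : 0 < p) {t : ℝ} (ht : 0 ≤ t) (x : Fin n → ℝ) :
    lpnorm p (t • x) = t * lpnorm p x := by
  unfold lpnorm
  have h1 : ∀ i, |t * x i| ^ p = t ^ p * |x i| ^ p := fun i => by
    rw [abs_mul, abs_of_nonneg ht, Real.mul_rpow ht (abs_nonneg _)]
  simp only [Pi.smul_apply, smul_eq_mul, h1, ← Finset.mul_sum]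
  rw [Real.mul_rpow (Real.rpow_nonneg ht _)
    (Finset.sum_nonneg fun i _ => Real.rpow_nonneg (abs_nonneg _) _),
    ← Real.rpow_mul ht, mul_one_div, div_self hp.ne', Real.rpow_one]
  
lemma lpnorm_eq_zero (hp : 0 < p) {x : Fin n → ℝ} (hx : lpnorm p x ≤ 0) : x = 0 := by
  by_contra h
  exact absurd hx (not_le.2 (lpnorm_pos hp h))

lemma dir_smul (hp : 0 < p) {r : ℝ} (hr : 0 < r) (y : Fin n → ℝ) :
    (lpnorm p (r • y))⁻¹ • (r • y) = (lpnorm p y)⁻¹ • y := by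
  rcases eq_or_ne y 0 with rfl | hy
  · simp
  · have hL : 0 < lpnorm p y := lpnorm_pos hp hy
    rw [lpnorm_smul hp hr.le, smul_smul, mul_inv]
    congr 1
    field_simp

/-- change of variables by scaling for lintegrals on `Fin n → ℝ`. -/
lemma lintegral_scale (h : (Fin n → ℝ) → ENNReal) (hh : Measurable h) {r : ℝ} (hr : 0 < r) :
    ∫⁻ x, h x = ENNReal.ofReal (r ^ n) * ∫⁻ y, h (r • y) := by
  have hmap := Measure.map_addHaar_smul (volume : Measure (Fin n → ℝ)) hr.ne'
  have h1 : ∫⁻ y, h (r • y) = ∫⁻ x, h x ∂(Measure.map (fun y : Fin n → ℝ => r • y) volume) :=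
    (lintegral_map hh (measurable_const_smul r)).symm
  rw [h1, hmap, lintegral_smul_measure]
  have hfr : Module.finrank ℝ (Fin n → ℝ) = n := by simp
  rw [hfr, abs_of_nonneg (by positivity : (0:ℝ) ≤ (r ^ n)⁻¹)]
  rw [smul_eq_mul, ← mul_assoc, ← ENNReal.ofReal_mul (by positivity), mul_inv_cancel₀ (by positivity),
    ENNReal.ofReal_one, one_mul]

lemma measurable_dir (hp : 0 < p) :
    Measurable (fun x : Fin n → ℝ => (lpnorm p x)⁻¹ • x) := by
  have := measurable_lpnorm p n
  fun_prop

/-- Core scaling identity. -/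
lemma scale_core (hp : 0 < p) {m : ℝ}
    (f : (Fin n → ℝ) → ℝ) (hf_meas : Measurable f)
    (hf_hom : ∀ (t : ℝ), 0 ≤ t → ∀ x, f (t • x) = t ^ m * f x)
    {s : Set (Fin n → ℝ)} (hs : MeasurableSet s)
    {T T' : Set ℝ} (hT : MeasurableSet T) (hT' : MeasurableSet T')
    {r : ℝ} (hr : 0 < r) (hTT' : ∀ a : ℝ, r * a ∈ T ↔ a ∈ T') :
    ∫⁻ x in ((fun x => (lpnorm p x)⁻¹ • x) ⁻¹' s) ∩ (lpnorm p ⁻¹' T), ENNReal.ofReal (f x)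
      = ENNReal.ofReal (r ^ ((n : ℝ) + m)) *
        ∫⁻ y in ((fun x => (lpnorm p x)⁻¹ • x) ⁻¹' s) ∩ (lpnorm p ⁻¹' T'), ENNReal.ofReal (f y) := by
  classical
  set A := ((fun x : Fin n → ℝ => (lpnorm p x)⁻¹ • x) ⁻¹' s) ∩ (lpnorm p ⁻¹' T) with hA
  set A' := ((fun x : Fin n → ℝ => (lpnorm p x)⁻¹ • x) ⁻¹' s) ∩ (lpnorm p ⁻¹' T') with hA'
  have hAmeas : MeasurableSet A :=
    ((measurable_dir hp) hs).inter ((measurable_lpnorm p n) hT)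
  have hA'meas : MeasurableSet A' :=
    ((measurable_dir hp) hs).inter ((measurable_lpnorm p n) hT')
  have key : ∀ y : Fin n → ℝ,
      A.indicator (fun x => ENNReal.ofReal (f x)) (r • y)
        = ENNReal.ofReal (r ^ m) * A'.indicator (fun x => ENNReal.ofReal (f x)) y := by
    intro y
    have hmem : (r • y) ∈ A ↔ y ∈ A' := by
      rw [hA, hA', Set.mem_inter_iff, Set.mem_inter_iff]
      constructor <;> intro ⟨h1, h2⟩ <;> constructor
      · rwa [Set.mem_preimage, dir_smul hp hr] at h1
      · rw [Set.mem_preimage] at h2 ⊢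
        rwa [lpnorm_smul hp hr.le, hTT'] at h2
      · rwa [Set.mem_preimage, dir_smul hp hr]
      · rw [Set.mem_preimage] at h2 ⊢
        rwa [lpnorm_smul hp hr.le, hTT']
    by_cases hy : y ∈ A'
    · rw [Set.indicator_of_mem (hmem.2 hy), Set.indicator_of_mem hy,
        hf_hom r hr.le, ENNReal.ofReal_mul (Real.rpow_nonneg hr.le m)]
    · rw [Set.indicator_of_notMem (fun h => hy (hmem.1 h)), Set.indicator_of_notMem hy,
        mul_zero]
  rw [← lintegral_indicator hAmeas, ← lintegral_indicator hA'meas]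
  rw [lintegral_scale _ (Measurable.indicator (by fun_prop) hAmeas) hr]
  simp only [key]
  rw [lintegral_const_mul' _ _ ENNReal.ofReal_ne_top, ← mul_assoc,
    ← ENNReal.ofReal_mul (by positivity), Real.rpow_add hr, Real.rpow_natCast]

lemma lpnorm_ball_subset (hp : 0 < p) :
    {x : Fin n → ℝ | lpnorm p x ≤ 1} ⊆ Set.pi Set.univ (fun _ : Fin n => Icc (-1 : ℝ) 1) := by
  intro x hx
  simp only [Set.mem_setOf_eq] at hx
  intro i _
  have hsum : ∑ j, |x j| ^ p ≤ 1 := by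
    by_contra h
    push_neg at h
    have : (1 : ℝ) < (∑ j, |x j| ^ p) ^ (1 / p) := by
      calc (1:ℝ) = 1 ^ (1/p) := (Real.one_rpow _).symm
      _ < (∑ j, |x j| ^ p) ^ (1/p) :=
        Real.rpow_lt_rpow (by norm_num) h (by positivity)
    exact absurd hx (not_le.2 this)
  have hterm : |x i| ^ p ≤ 1 := by
    calc |x i| ^ p ≤ ∑ j, |x j| ^ p :=
      Finset.single_le_sum (fun j _ => Real.rpow_nonneg (abs_nonneg _) _) (Finset.mem_univ i)
    _ ≤ 1 := hsum
  have habs : |x i| ≤ 1 := by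
    by_contra h
    push_neg at h
    have : (1:ℝ) < |x i| ^ p := Real.one_lt_rpow_iff_of_pos (by positivity) |>.2 (Or.inl ⟨h, hp⟩)
    linarith
  exact abs_le.1 habs

lemma volume_lpnorm_le_one_lt_top (hp : 0 < p) :
    volume {x : Fin n → ℝ | lpnorm p x ≤ 1} < ⊤ := by
  apply lt_of_le_of_lt (measure_mono (lpnorm_ball_subset hp))
  rw [volume_pi_pi]
  simp [Real.volume_Icc]

lemma volume_lpnorm_sphere (hp : 0 < p) {c : ℝ} (hc : 0 < c) :
    volume {x : Fin n → ℝ | lpnorm p x = c} = 0 := by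
  classical
  -- scaling: volume {L ∈ T} with f = 1, m = 0, s = univ
  have hone : ∀ (t : ℝ), 0 ≤ t → ∀ x : Fin n → ℝ, (1 : ℝ) = t ^ (0:ℝ) * 1 := by
    intro t ht x; rw [Real.rpow_zero, one_mul]
  have scale : ∀ (T T' : Set ℝ), MeasurableSet T → MeasurableSet T' →
      ∀ {r : ℝ}, 0 < r → (∀ a : ℝ, r * a ∈ T ↔ a ∈ T') →
      volume (lpnorm p (n := n) ⁻¹' T) = ENNReal.ofReal (r ^ (n:ℝ)) * volume (lpnorm p (n := n) ⁻¹' T') := by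
    intro T T' hT hT' r hr hTT'
    have := scale_core (n := n) hp (m := 0) (fun _ => 1) measurable_const
      (fun t ht x => by rw [Real.rpow_zero, one_mul]) MeasurableSet.univ hT hT' hr hTT'
    simpa [Set.preimage_univ, Set.univ_inter, ENNReal.ofReal_one, setLIntegral_one] using this
  have hVle : ∀ {c : ℝ}, 0 < c → volume {x : Fin n → ℝ | lpnorm p x ≤ c}
      = ENNReal.ofReal (c ^ (n:ℝ)) * volume {x : Fin n → ℝ | lpnorm p x ≤ 1} := by
    intro c hc
    have := scale (Iic c) (Iic 1) measurableSet_Iic measurableSet_Iic hc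
      (fun a => by rw [Set.mem_Iic, Set.mem_Iic]; constructor <;> intro h <;> nlinarith)
    simpa [Set.preimage, Set.mem_Iic] using this
  have hVlt : ∀ {c : ℝ}, 0 < c → volume {x : Fin n → ℝ | lpnorm p x < c}
      = ENNReal.ofReal (c ^ (n:ℝ)) * volume {x : Fin n → ℝ | lpnorm p x < 1} := by
    intro c hc
    have := scale (Iio c) (Iio 1) measurableSet_Iio measurableSet_Iio hc
      (fun a => by rw [Set.mem_Iio, Set.mem_Iio]; constructor <;> intro h <;> nlinarith)
    simpa [Set.preimage, Set.mem_Iio] using this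
  set A := volume {x : Fin n → ℝ | lpnorm p x ≤ 1} with hA
  set B := volume {x : Fin n → ℝ | lpnorm p x < 1} with hB
  have hBA : B ≤ A := measure_mono (fun x hx => (show lpnorm p x < 1 from hx).le)
  have hAtop : A ≠ ⊤ := (volume_lpnorm_le_one_lt_top hp).ne
  have hAB : A ≤ B := by
    have key : ∀ t : ℝ, 1 < t → A ≤ ENNReal.ofReal (t ^ (n:ℝ)) * B := by
      intro t ht
      calc A ≤ volume {x : Fin n → ℝ | lpnorm p x < t} :=
        measure_mono (fun x hx => lt_of_le_of_lt (show lpnorm p x ≤ 1 from hx) ht)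
      _ = ENNReal.ofReal (t ^ (n:ℝ)) * B := hVlt (by linarith)
    have htend : Filter.Tendsto (fun k : ℕ => ENNReal.ofReal ((1 + 1/(k+1)) ^ (n:ℝ)) * B)
        Filter.atTop (nhds B) := by
      have h1 : Filter.Tendsto (fun k : ℕ => ((1 : ℝ) + 1/(k+1)) ^ (n:ℝ))
          Filter.atTop (nhds 1) := by
        have : Filter.Tendsto (fun k : ℕ => (1 : ℝ) + 1/(k+1)) Filter.atTop (nhds 1) := by
          have := tendsto_one_div_add_atTop_nhds_zero_nat (𝕜 := ℝ)
          simpa using Filter.Tendsto.const_add 1 this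
        have := this.rpow_const (p := (n:ℝ)) (Or.inr (Nat.cast_nonneg n))
        simpa using this
      have h2 : Filter.Tendsto (fun k : ℕ => ENNReal.ofReal ((1 + 1/(k+1)) ^ (n:ℝ)))
          Filter.atTop (nhds 1) := by
        have := ENNReal.tendsto_ofReal h1
        simpa using this
      have := ENNReal.Tendsto.mul_const (b := B) h2 (Or.inl one_ne_zero)
      simpa using this
    apply ge_of_tendsto htend
    filter_upwards with k
    refine key _ ?_
    have hk : (0:ℝ) < 1/((k:ℝ)+1) := by positivity
    linarith
  have hABeq : A = B := le_antisymm hAB hBA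
  have heq : {x : Fin n → ℝ | lpnorm p x = c}
      = {x : Fin n → ℝ | lpnorm p x ≤ c} \ {x : Fin n → ℝ | lpnorm p x < c} := by
    ext x; simp only [Set.mem_setOf_eq, Set.mem_diff, not_lt]
    constructor
    · intro h; exact ⟨h.le, h.ge⟩
    · intro ⟨h1, h2⟩; exact le_antisymm h1 h2
  have hsub : {x : Fin n → ℝ | lpnorm p x < c} ⊆ {x : Fin n → ℝ | lpnorm p x ≤ c} :=
    fun x hx => (show lpnorm p x < c from hx).le
  have hltne : volume {x : Fin n → ℝ | lpnorm p x < c} ≠ ⊤ := by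
    rw [hVlt hc]
    exact ENNReal.mul_ne_top ENNReal.ofReal_ne_top (hABeq ▸ hAtop)
  have hdiff := measure_diff hsub
    (((measurable_lpnorm p n) measurableSet_Iio).nullMeasurableSet) hltne
  rw [heq, hdiff, hVle hc, hVlt hc, hABeq, tsub_self]

lemma exp_layer (a : ℝ) :
    ENNReal.ofReal (Real.exp (-a)) = ∫⁻ t in Ioi a, ENNReal.ofReal (Real.exp (-t)) := by
  rw [← ofReal_integral_eq_lintegral_ofReal
    (by simpa [IntegrableOn] using exp_neg_integrableOn_Ioi a one_pos)
    (Filter.Eventually.of_forall fun t => (Real.exp_pos _).le),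
    integral_exp_neg_Ioi]

lemma rpow_lt_iff {a t : ℝ} (hp : 0 < p) (ha : 0 ≤ a) (ht : 0 < t) :
    a ^ p < t ↔ a < t ^ (1/p) := by
  nth_rewrite 1 [show t = (t ^ (1/p)) ^ p by
    rw [← Real.rpow_mul ht.le, one_div, inv_mul_cancel₀ hp.ne', Real.rpow_one]]
  exact Real.rpow_lt_rpow_iff ha (Real.rpow_nonneg ht.le _) hp

lemma master (hp : 0 < p) {m : ℝ} (f : (Fin n → ℝ) → ℝ)
    (hf_meas : Measurable f) (hf_nonneg : ∀ x, 0 ≤ f x)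
    (hf_hom : ∀ (t : ℝ), 0 ≤ t → ∀ x, f (t • x) = t ^ m * f x)
    {s : Set (Fin n → ℝ)} (hs : MeasurableSet s) {r : ℝ} (hr : 0 < r) :
    ∫⁻ x in ((fun x : Fin n → ℝ => (lpnorm p x)⁻¹ • x) ⁻¹' s) ∩ (lpnorm p ⁻¹' Iic r),
        ENNReal.ofReal (f x * Real.exp (-(lpnorm p x) ^ p))
      = (∫⁻ x in ((fun x : Fin n → ℝ => (lpnorm p x)⁻¹ • x) ⁻¹' s) ∩ (lpnorm p ⁻¹' Iic 1),
          ENNReal.ofReal (f x)) *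
        ∫⁻ t in Ioi (0:ℝ),
          ENNReal.ofReal (Real.exp (-t)) * ENNReal.ofReal (min r (t ^ (1/p)) ^ ((n:ℝ) + m)) := by
  classical
  have hLmeas := measurable_lpnorm p n
  have hDmeas := measurable_dir (n := n) hp
  have hAm : MeasurableSet ((fun x : Fin n → ℝ => (lpnorm p x)⁻¹ • x) ⁻¹' s) := hDmeas hs
  have hEm : MeasurableSet
      (((fun x : Fin n → ℝ => (lpnorm p x)⁻¹ • x) ⁻¹' s) ∩ (lpnorm p ⁻¹' Iic r)) :=
    hAm.inter (hLmeas measurableSet_Iic)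
  set E := ((fun x : Fin n → ℝ => (lpnorm p x)⁻¹ • x) ⁻¹' s) ∩ (lpnorm p ⁻¹' Iic r) with hE
  set ψ1 := ∫⁻ x in ((fun x : Fin n → ℝ => (lpnorm p x)⁻¹ • x) ⁻¹' s) ∩ (lpnorm p ⁻¹' Iic 1),
      ENNReal.ofReal (f x) with hψ1
  set F : (Fin n → ℝ) → ℝ → ENNReal := fun x t =>
    E.indicator (fun x => ENNReal.ofReal (f x)) x *
      (Ioi ((lpnorm p x) ^ p)).indicator (fun t => ENNReal.ofReal (Real.exp (-t))) t with hF
  -- Step 1: rewrite LHS as double integral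
  have step1 : ∫⁻ x in E, ENNReal.ofReal (f x * Real.exp (-(lpnorm p x) ^ p))
      = ∫⁻ x, ∫⁻ t, F x t ∂volume ∂volume := by
    rw [← lintegral_indicator hEm]
    apply lintegral_congr
    intro x
    have hconst : E.indicator (fun x => ENNReal.ofReal (f x)) x ≠ ⊤ := by
      by_cases hx : x ∈ E <;> simp [Set.indicator, hx]
    rw [hF]
    simp only
    rw [lintegral_const_mul' _ _ hconst, lintegral_indicator measurableSet_Ioi,
      ← exp_layer]
    by_cases hx : x ∈ E
    · rw [Set.indicator_of_mem hx, Set.indicator_of_mem hx,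
        ENNReal.ofReal_mul (hf_nonneg x)]
    · rw [Set.indicator_of_notMem hx, Set.indicator_of_notMem hx, zero_mul]
  -- Step 2: measurability and swap
  have hFmeas : Measurable (Function.uncurry F) := by
    have heq : Function.uncurry F = fun q : (Fin n → ℝ) × ℝ =>
        (E.indicator (fun x => ENNReal.ofReal (f x)) q.1) *
          ({q : (Fin n → ℝ) × ℝ | (lpnorm p q.1) ^ p < q.2}.indicator
            (fun q => ENNReal.ofReal (Real.exp (-q.2))) q) := by
      funext q
      rw [Function.uncurry, hF]
      simp only
      congr 1
    rw [heq]
    have h1 : Measurable fun q : (Fin n → ℝ) × ℝ => (lpnorm p q.1) ^ p := by fun_prop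
    have hset : MeasurableSet {q : (Fin n → ℝ) × ℝ | (lpnorm p q.1) ^ p < q.2} :=
      measurableSet_lt h1 measurable_snd
    exact (((by fun_prop : Measurable fun x : Fin n → ℝ => ENNReal.ofReal (f x)).indicator
        hEm).comp measurable_fst).mul
      ((by fun_prop : Measurable fun q : (Fin n → ℝ) × ℝ =>
        ENNReal.ofReal (Real.exp (-q.2))).indicator hset)
  rw [step1, lintegral_lintegral_swap hFmeas.aemeasurable]
  -- Step 3: inner integral evaluation
  have hinner : ∀ t : ℝ, (∫⁻ x, F x t ∂volume)
      = (Ioi (0:ℝ)).indicator (fun t => ENNReal.ofReal (Real.exp (-t)) *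
          (ENNReal.ofReal (min r (t ^ (1/p)) ^ ((n:ℝ) + m)) * ψ1)) t := by
    intro t
    by_cases ht : 0 < t
    · rw [Set.indicator_of_mem (Set.mem_Ioi.2 ht)]
      set c := t ^ (1/p) with hc
      have hcpos : 0 < c := Real.rpow_pos_of_pos ht _
      have hFx : ∀ x, F x t = ENNReal.ofReal (Real.exp (-t)) *
          (E ∩ (lpnorm p ⁻¹' Iio c)).indicator (fun x => ENNReal.ofReal (f x)) x := by
        intro x
        have hxi : ((lpnorm p x) ^ p < t) ↔ lpnorm p x < c :=
          rpow_lt_iff hp (lpnorm_nonneg p x) ht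
        rw [hF]
        simp only [Set.indicator_apply, Set.mem_Ioi, Set.mem_inter_iff, Set.mem_preimage,
          Set.mem_Iio, hxi]
        by_cases hx1 : x ∈ E <;> by_cases hx2 : lpnorm p x < c <;>
          simp [hx1, hx2, mul_comm]
      simp only [hFx]
      rw [lintegral_const_mul' _ _ ENNReal.ofReal_ne_top,
        lintegral_indicator (hEm.inter (hLmeas measurableSet_Iio))]
      congr 1
      -- now: ∫⁻ x in E ∩ {L < c}, ofReal f = ofReal (min r c ^ (n+m)) * ψ1
      have hminpos : 0 < min r c := lt_min hr hcpos
      have hae : ((E ∩ (lpnorm p ⁻¹' Iio c)) : Set (Fin n → ℝ)) =ᵐ[volume]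
          (((((fun x : Fin n → ℝ => (lpnorm p x)⁻¹ • x) ⁻¹' s)
            ∩ (lpnorm p ⁻¹' Iic (min r c))) : Set (Fin n → ℝ))) := by
        rw [MeasureTheory.ae_eq_set]
        constructor
        · apply measure_mono_null _ (measure_empty (μ := (volume : Measure (Fin n → ℝ))))
          intro x hx
          simp only [hE, Set.mem_diff, Set.mem_inter_iff, Set.mem_preimage, Set.mem_Iic,
            Set.mem_Iio] at hx
          obtain ⟨⟨⟨hx1, hx2⟩, hx3⟩, hx4⟩ := hx
          exact absurd ⟨hx1, le_min hx2 hx3.le⟩ hx4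
        · apply measure_mono_null _ (volume_lpnorm_sphere hp hcpos)
          intro x hx
          simp only [hE, Set.mem_diff, Set.mem_inter_iff, Set.mem_preimage, Set.mem_Iic,
            Set.mem_Iio, not_and, not_lt] at hx
          obtain ⟨⟨hx1, hx2⟩, hx3⟩ := hx
          have h1 : lpnorm p x ≤ c := le_trans hx2 (min_le_right _ _)
          have h2 : c ≤ lpnorm p x := hx3 ⟨hx1, le_trans hx2 (min_le_left _ _)⟩
          exact Set.mem_setOf_eq ▸ le_antisymm h1 h2
      rw [setLIntegral_congr hae]
      exact scale_core hp f hf_meas hf_hom hs measurableSet_Iic measurableSet_Iic hminpos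
        (fun a => by
          rw [Set.mem_Iic, Set.mem_Iic]
          exact mul_le_iff_le_one_right hminpos)
    · rw [Set.indicator_of_notMem (fun h => ht (Set.mem_Ioi.1 h))]
      have hFx : ∀ x, F x t = 0 := by
        intro x
        have hni : ¬ ((lpnorm p x) ^ p < t) := fun h =>
          ht (lt_of_le_of_lt (Real.rpow_nonneg (lpnorm_nonneg p x) p) h)
        rw [hF]
        simp only [Set.indicator_apply, Set.mem_Ioi, if_neg hni, mul_zero]
      simp only [hFx]
      exact lintegral_zero
  simp only [hinner]
  rw [lintegral_indicator measurableSet_Ioi]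
  have hmeas2 : Measurable (fun t : ℝ => ENNReal.ofReal (Real.exp (-t)) *
      ENNReal.ofReal (min r (t ^ (1/p)) ^ ((n:ℝ) + m))) := by
    refine Measurable.mul (f := fun t : ℝ => ENNReal.ofReal (Real.exp (-t)))
      (g := fun t : ℝ => ENNReal.ofReal (min r (t ^ (1/p)) ^ ((n:ℝ) + m))) ?_ ?_
    · fun_prop
    · apply Measurable.ennreal_ofReal
      have h1 : Measurable fun t : ℝ => min r (t ^ (1/p)) := by
        apply Measurable.min measurable_const
        fun_prop
      fun_prop
  calc ∫⁻ t in Ioi (0:ℝ), ENNReal.ofReal (Real.exp (-t)) *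
        (ENNReal.ofReal (min r (t ^ (1/p)) ^ ((n:ℝ) + m)) * ψ1)
      = ∫⁻ t in Ioi (0:ℝ), (ENNReal.ofReal (Real.exp (-t)) *
        ENNReal.ofReal (min r (t ^ (1/p)) ^ ((n:ℝ) + m))) * ψ1 := by
        simp only [mul_assoc]
    _ = (∫⁻ t in Ioi (0:ℝ), ENNReal.ofReal (Real.exp (-t)) *
        ENNReal.ofReal (min r (t ^ (1/p)) ^ ((n:ℝ) + m))) * ψ1 :=
        lintegral_mul_const _ hmeas2
    _ = _ := mul_comm _ _

lemma indepFun_of_const {Ω β γ : Type*} [MeasurableSpace Ω] [MeasurableSpace β]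
    [MeasurableSpace γ] (P : Measure Ω) [IsProbabilityMeasure P] (g : Ω → β) (c : γ) :
    IndepFun g (fun _ => c) P := by
  rw [indepFun_iff_measure_inter_preimage_eq_mul]
  intro s t hs ht
  by_cases hc : c ∈ t
  · have h1 : (fun _ : Ω => c) ⁻¹' t = Set.univ := by ext; simp [hc]
    rw [h1, Set.inter_univ, measure_univ, mul_one]
  · have h1 : (fun _ : Ω => c) ⁻¹' t = ∅ := by ext; simp [hc]
    rw [h1, Set.inter_empty, measure_empty, mul_zero]

/-- If `X` has density proportional to `f(x)·e^{-‖x‖_p^p}` with `f`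
nonnegative, measurable and positively homogeneous of degree `m`, then the radial
projection `X/‖X‖_p` and the norm `‖X‖_p` are independent. -/
theorem direction_norm_indep
    (p : ℝ) (hp : 0 < p) (n : ℕ) (m : ℝ) (hm : 0 ≤ m)
    (f : (Fin n → ℝ) → ℝ) (hf_meas : Measurable f) (hf_nonneg : ∀ x, 0 ≤ f x)
    (hf_hom : ∀ (t : ℝ), 0 ≤ t → ∀ x, f (t • x) = t ^ m * f x)
    (hf_int : 0 < ∫ x, f x * Real.exp (-(lpnorm p x) ^ p))
    (C : ℝ) (hC : 0 < C)
    {Ω : Type*} [MeasurableSpace Ω] (P : Measure Ω) [IsProbabilityMeasure P]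
    (X : Ω → (Fin n → ℝ)) (hX : Measurable X)
    (hdens : Measure.map X P =
      volume.withDensity (fun x => ENNReal.ofReal (C * f x * Real.exp (-(lpnorm p x) ^ p)))) :
    IndepFun (fun ω => (lpnorm p (X ω))⁻¹ • X ω) (fun ω => lpnorm p (X ω)) P := by
  classical
  rcases Nat.eq_zero_or_pos n with hn | hn
  · -- trivial case n = 0
    subst hn
    have hsub : ∀ ω, X ω = 0 := fun ω => Subsingleton.elim _ _
    have hVconst : (fun ω => lpnorm p (X ω)) = fun _ => lpnorm p (0 : Fin 0 → ℝ) := by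
      funext ω; rw [hsub ω]
    rw [hVconst]
    exact indepFun_of_const P _ _
  -- main case
  have hLmeas := measurable_lpnorm p n
  have hDmeas := measurable_dir (n := n) hp
  set g : (Fin n → ℝ) → ENNReal :=
    fun x => ENNReal.ofReal (C * f x * Real.exp (-(lpnorm p x) ^ p)) with hg
  set μ := volume.withDensity g with hμ
  have hgmeas : Measurable g := by fun_prop
  have hprob : IsProbabilityMeasure μ := hdens ▸ Measure.isProbabilityMeasure_map hX.aemeasurable
  have hμapp : ∀ {A : Set (Fin n → ℝ)}, MeasurableSet A → μ A = ∫⁻ x in A, g x :=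
    fun {A} hA => withDensity_apply g hA
  have hzero : volume ({x : Fin n → ℝ | lpnorm p x ≤ 0}) = 0 := by
    have hss : {x : Fin n → ℝ | lpnorm p x ≤ 0} ⊆ Set.pi Set.univ (fun _ : Fin n => {(0:ℝ)}) := by
      intro x hx
      have hx0 : x = 0 := lpnorm_eq_zero hp hx
      subst hx0
      intro i _
      rfl
    apply measure_mono_null hss
    rw [volume_pi_pi]
    simp [Real.volume_singleton, Finset.prod_const, zero_pow hn.ne']
  -- the two key quantities
  set ψ : Set (Fin n → ℝ) → ENNReal := fun s =>
    ∫⁻ x in ((fun x : Fin n → ℝ => (lpnorm p x)⁻¹ • x) ⁻¹' s) ∩ (lpnorm p ⁻¹' Iic 1),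
      ENNReal.ofReal (f x) with hψ
  set G : ℝ → ENNReal := fun r => ∫⁻ t in Ioi (0:ℝ),
      ENNReal.ofReal (Real.exp (-t)) * ENNReal.ofReal (min r (t ^ (1/p)) ^ ((n:ℝ) + m)) with hG
  have key_fin : ∀ (s : Set (Fin n → ℝ)), MeasurableSet s → ∀ {r : ℝ}, 0 < r →
      μ (((fun x : Fin n → ℝ => (lpnorm p x)⁻¹ • x) ⁻¹' s) ∩ (lpnorm p ⁻¹' Iic r))
        = (ENNReal.ofReal C * ψ s) * G r := by
    intro s hs r hr
    rw [hμapp ((hDmeas hs).inter (hLmeas measurableSet_Iic))]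
    have hptw : ∀ x : Fin n → ℝ, g x
        = ENNReal.ofReal C * ENNReal.ofReal (f x * Real.exp (-(lpnorm p x) ^ p)) := by
      intro x
      rw [hg]
      simp only
      rw [mul_assoc, ENNReal.ofReal_mul hC.le]
    calc ∫⁻ x in ((fun x : Fin n → ℝ => (lpnorm p x)⁻¹ • x) ⁻¹' s) ∩ (lpnorm p ⁻¹' Iic r), g x
        = ∫⁻ x in ((fun x : Fin n → ℝ => (lpnorm p x)⁻¹ • x) ⁻¹' s) ∩ (lpnorm p ⁻¹' Iic r),
            ENNReal.ofReal C * ENNReal.ofReal (f x * Real.exp (-(lpnorm p x) ^ p)) := by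
          apply lintegral_congr; intro x; exact hptw x
      _ = ENNReal.ofReal C *
          ∫⁻ x in ((fun x : Fin n → ℝ => (lpnorm p x)⁻¹ • x) ⁻¹' s) ∩ (lpnorm p ⁻¹' Iic r),
            ENNReal.ofReal (f x * Real.exp (-(lpnorm p x) ^ p)) :=
          lintegral_const_mul' _ _ ENNReal.ofReal_ne_top
      _ = ENNReal.ofReal C * (ψ s * G r) := by
          rw [master hp f hf_meas hf_nonneg hf_hom hs hr]
      _ = (ENNReal.ofReal C * ψ s) * G r := by rw [mul_assoc]
  have key_zero : ∀ {a : ℝ}, a ≤ 0 → μ (lpnorm p ⁻¹' Iic a) = 0 := by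
    intro a ha
    have h1 : μ (lpnorm p ⁻¹' Iic a) ≤ μ {x : Fin n → ℝ | lpnorm p x ≤ 0} :=
      measure_mono (fun x hx => le_trans (Set.mem_Iic.1 hx) ha)
    have h2 : μ {x : Fin n → ℝ | lpnorm p x ≤ 0} = 0 :=
      (withDensity_absolutelyContinuous volume g) hzero
    exact le_antisymm (h1.trans h2.le) (zero_le)
  have key_univ : ∀ (s : Set (Fin n → ℝ)), MeasurableSet s →
      μ ((fun x : Fin n → ℝ => (lpnorm p x)⁻¹ • x) ⁻¹' s)
        = (ENNReal.ofReal C * ψ s) * ⨆ k : ℕ, G (k + 1) := by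
    intro s hs
    have hun : (fun x : Fin n → ℝ => (lpnorm p x)⁻¹ • x) ⁻¹' s =
        ⋃ k : ℕ, (((fun x : Fin n → ℝ => (lpnorm p x)⁻¹ • x) ⁻¹' s)
          ∩ (lpnorm p ⁻¹' Iic ((k : ℝ) + 1))) := by
      ext x
      simp only [Set.mem_iUnion, Set.mem_inter_iff, Set.mem_preimage, Set.mem_Iic]
      constructor
      · intro hx
        obtain ⟨k, hk⟩ := exists_nat_ge (lpnorm p x)
        exact ⟨k, hx, le_trans hk (by linarith)⟩
      · rintro ⟨k, hk, _⟩; exact hk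
    rw [hun, Directed.measure_iUnion]
    · have : ∀ k : ℕ, μ (((fun x : Fin n → ℝ => (lpnorm p x)⁻¹ • x) ⁻¹' s)
          ∩ (lpnorm p ⁻¹' Iic ((k : ℝ) + 1)))
          = (ENNReal.ofReal C * ψ s) * G ((k : ℝ) + 1) := fun k =>
        key_fin s hs (by positivity)
      simp only [this]
      rw [ENNReal.mul_iSup]
    · intro i j
      rcases le_total i j with hij | hij
      · exact ⟨j, fun x hx => ⟨hx.1, show lpnorm p x ≤ (j:ℝ)+1 from
            le_trans (show lpnorm p x ≤ (i:ℝ)+1 from hx.2)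
              (by have : (i : ℝ) ≤ j := Nat.cast_le.2 hij; linarith)⟩,
          fun x hx => hx⟩
      · exact ⟨i, fun x hx => hx,
          fun x hx => ⟨hx.1, show lpnorm p x ≤ (i:ℝ)+1 from
            le_trans (show lpnorm p x ≤ (j:ℝ)+1 from hx.2)
              (by have : (j : ℝ) ≤ i := Nat.cast_le.2 hij; linarith)⟩⟩
  -- normalization
  have hnorm : (ENNReal.ofReal C * ψ Set.univ) * (⨆ k : ℕ, G (k + 1)) = 1 := by
    have h1 : μ Set.univ = 1 := measure_univ
    have h2 := key_univ Set.univ MeasurableSet.univ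
    rw [Set.preimage_univ] at h2
    rw [← h2, h1]
  -- joint measure equals product measure, on half lines
  have main : ∀ (s : Set (Fin n → ℝ)), MeasurableSet s → ∀ (t : Set ℝ), MeasurableSet t →
      μ (((fun x : Fin n → ℝ => (lpnorm p x)⁻¹ • x) ⁻¹' s) ∩ (lpnorm p ⁻¹' t))
        = μ ((fun x : Fin n → ℝ => (lpnorm p x)⁻¹ • x) ⁻¹' s) * μ (lpnorm p ⁻¹' t) := by
    intro s hs
    set A := (fun x : Fin n → ℝ => (lpnorm p x)⁻¹ • x) ⁻¹' s with hA
    have hAm : MeasurableSet A := hDmeas hs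
    set ν₁ : Measure ℝ := Measure.map (lpnorm p) (μ.restrict A) with hν₁
    set ν₂ : Measure ℝ := μ A • Measure.map (lpnorm p) μ with hν₂
    have hν₁app : ∀ {t : Set ℝ}, MeasurableSet t → ν₁ t = μ (A ∩ lpnorm p ⁻¹' t) := by
      intro t ht
      rw [hν₁, Measure.map_apply hLmeas ht, Measure.restrict_apply (hLmeas ht), Set.inter_comm]
    have hν₂app : ∀ {t : Set ℝ}, MeasurableSet t → ν₂ t = μ A * μ (lpnorm p ⁻¹' t) := by
      intro t ht
      rw [hν₂, Measure.smul_apply, Measure.map_apply hLmeas ht, smul_eq_mul]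
    have hfin : IsFiniteMeasure ν₁ := by
      constructor
      rw [hν₁app MeasurableSet.univ]
      exact lt_of_le_of_lt (measure_mono (Set.inter_subset_left)) (measure_lt_top μ A)
    have heq : ν₁ = ν₂ := by
      apply Measure.ext_of_Iic
      intro a
      rw [hν₁app measurableSet_Iic, hν₂app measurableSet_Iic]
      rcases le_or_gt a 0 with ha | ha
      · have h1 : μ (A ∩ lpnorm p ⁻¹' Iic a) = 0 :=
          measure_mono_null Set.inter_subset_right (key_zero ha)
        rw [h1, key_zero ha, mul_zero]
      · have h1 : μ (A ∩ lpnorm p ⁻¹' Iic a) = (ENNReal.ofReal C * ψ s) * G a :=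
          key_fin s hs ha
        have h2 : μ (lpnorm p ⁻¹' Iic a)
            = (ENNReal.ofReal C * ψ Set.univ) * G a := by
          have := key_fin Set.univ MeasurableSet.univ ha
          rwa [Set.preimage_univ, Set.univ_inter] at this
        rw [h1, h2, key_univ s hs]
        calc (ENNReal.ofReal C * ψ s) * G a
            = ((ENNReal.ofReal C * ψ s) * G a) * 1 := (mul_one _).symm
          _ = ((ENNReal.ofReal C * ψ s) * G a) *
              ((ENNReal.ofReal C * ψ Set.univ) * (⨆ k : ℕ, G (k + 1))) := by rw [hnorm]
          _ = (ENNReal.ofReal C * ψ s) * (⨆ k : ℕ, G (↑k + 1)) *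
              ((ENNReal.ofReal C * ψ Set.univ) * G a) := by ring
    intro t ht
    have := congrArg (fun ν : Measure ℝ => ν t) heq
    rw [hν₁app ht, hν₂app ht] at this
    exact this
  -- conclude
  rw [indepFun_iff_measure_inter_preimage_eq_mul]
  intro s t hs ht
  have hps : (fun ω => (lpnorm p (X ω))⁻¹ • X ω) ⁻¹' s
      = X ⁻¹' ((fun x : Fin n → ℝ => (lpnorm p x)⁻¹ • x) ⁻¹' s) := rfl
  have hpt : (fun ω => lpnorm p (X ω)) ⁻¹' t = X ⁻¹' (lpnorm p ⁻¹' t) := rfl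
  have hPapp : ∀ {A : Set (Fin n → ℝ)}, MeasurableSet A → P (X ⁻¹' A) = μ A := by
    intro A hA
    rw [← Measure.map_apply hX hA, hdens]
  rw [hps, hpt, ← Set.preimage_inter,
    hPapp (((hDmeas hs).inter (hLmeas ht))), hPapp (hDmeas hs), hPapp (hLmeas ht)]
  exact main s hs t ht
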